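/- Let τ > 0, z > 0 and Δτ satisfy 0 < Δτ ≤ (1+z)·τ, and suppose f, g ∈ (0,1] satisfy the necessary condition f ≥ g/(1+g). Then Δτ ≤ f·(1+z)·τ·(1+1/g), hence ( Δτ/( f·(1+z)·τ·(1+1/g) ) )^{g} ≤ 1; i.e. under the necessary condition of Proposition 6 the optimal price gap does not exceed the full width |p^c − p̄| of the fuzzy arm's-length price. -/

import Mathlib

open Real Set Filter Topology

/-- If `0 < Δτ ≤ (1+z)·τ` and `f, g ∈ (0,1]` satisfy the necessary condition
`f ≥ g/(1+g)`, then `Δτ ≤ f·(1+z)·τ·(1+1/g)` and hence the maximising share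
`(Δτ/(f·(1+z)·τ·(1+1/g)))^g` is at most `1`. -/
theorem stmt17 (Δτ τ z f g : ℝ)
    (hΔτ : 0 < Δτ) (hΔτ' : Δτ ≤ (1 + z) * τ) (hτ : 0 < τ) (hz : 0 < z)
    (hf : f ∈ Set.Ioc (0 : ℝ) 1) (hg : g ∈ Set.Ioc (0 : ℝ) 1)
    (hfg : f ≥ g / (1 + g)) :
    Δτ ≤ f * (1 + z) * τ * (1 + 1 / g) ∧
    (Δτ / (f * (1 + z) * τ * (1 + 1 / g))) ^ g ≤ 1 := by
  obtain ⟨hf0, hf1⟩ := hf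
  obtain ⟨hg0, hg1⟩ := hg
  have hg1' : (0:ℝ) < 1 + g := by linarith
  have h1 : (1:ℝ) ≤ f * (1 + 1 / g) := by
    have key : g ≤ f * (1 + g) := by
      rw [ge_iff_le, div_le_iff₀ hg1'] at hfg
      linarith
    have heq : f * (1 + 1/g) = f * (1 + g) / g := by field_simp; ring_nf
    rw [heq, le_div_iff₀ hg0]; linarith
  have hzt : (0:ℝ) < (1 + z) * τ := by positivity
  have hmain : Δτ ≤ f * (1 + z) * τ * (1 + 1 / g) := by
    calc Δτ ≤ (1 + z) * τ := hΔτ'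
    _ = (1 + z) * τ * 1 := by ring
    _ ≤ (1 + z) * τ * (f * (1 + 1/g)) := by
        exact mul_le_mul_of_nonneg_left h1 (le_of_lt hzt)
    _ = f * (1 + z) * τ * (1 + 1/g) := by ring
  refine ⟨hmain, ?_⟩
  have hden : (0:ℝ) < f * (1 + z) * τ * (1 + 1 / g) := by positivity
  have hq : Δτ / (f * (1 + z) * τ * (1 + 1 / g)) ≤ 1 := by
    rw [div_le_one hden]; exact hmain
  exact Real.rpow_le_one (by positivity) hq (le_of_lt hg0)
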